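/- For every integer n ≥ 1, P_{2n−1}(x) = Σ_{k=0}^{n−1} Σ_{l=0}^{n−k−1} (C(n, l+k+1) · l!/(l+k)!) (−1)^{l} x^{k} and P_{2n}(x) = Σ_{k=0}^{n−1} Σ_{l=0}^{n−k−1} (C(n, l+k+1) · l!/(l+k+1)!) (−1)^{l} x^{k}. -/

import Mathlib

open Polynomial Finset

private def aC (n k : ℕ) : ℚ :=
  ∑ l ∈ Finset.range (n - k),
    (n.choose (l + k + 1) : ℚ) * (l.factorial : ℚ) / ((l + k).factorial : ℚ) * (-1 : ℚ) ^ l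

private def bC (n k : ℕ) : ℚ :=
  ∑ l ∈ Finset.range (n - k),
    (n.choose (l + k + 1) : ℚ) * (l.factorial : ℚ) / ((l + k + 1).factorial : ℚ) * (-1 : ℚ) ^ l

private lemma aC_self (n : ℕ) : aC n n = 0 := by simp [aC]
private lemma bC_self (n : ℕ) : bC n n = 0 := by simp [bC]

private lemma aC_succ_zero (n : ℕ) (hn : 1 ≤ n) : aC (n + 1) 0 = aC n 0 := by
  have h0 : ∀ m : ℕ, aC m 0 = ∑ l ∈ range m, (m.choose (l + 1) : ℚ) * (-1) ^ l := by
    intro m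
    unfold aC
    rw [Nat.sub_zero]
    refine Finset.sum_congr rfl fun l _ => ?_
    have hf : ((l + 0).factorial : ℚ) ≠ 0 := by positivity
    rw [Nat.add_zero] at hf ⊢
    field_simp
    simp
  rw [h0, h0]
  have halt : ∑ l ∈ range (n + 1), (n.choose l : ℚ) * (-1) ^ l = 0 := by
    have h1 := Int.alternating_sum_range_choose (n := n)
    rw [if_neg (by omega)] at h1
    have h2 : ((∑ i ∈ range (n + 1), (-1 : ℤ) ^ i * (n.choose i : ℤ) : ℤ) : ℚ) = 0 := by
      rw [h1]; norm_num
    push_cast at h2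
    rw [← h2]
    refine Finset.sum_congr rfl fun l _ => by ring
  calc ∑ l ∈ range (n + 1), ((n + 1).choose (l + 1) : ℚ) * (-1) ^ l
      = ∑ l ∈ range (n + 1), ((n.choose (l + 1) : ℚ) * (-1) ^ l + (n.choose l : ℚ) * (-1) ^ l) := by
        refine Finset.sum_congr rfl fun l _ => ?_
        rw [Nat.choose_succ_succ]
        push_cast
        ring
    _ = ∑ l ∈ range (n + 1), (n.choose (l + 1) : ℚ) * (-1) ^ l
          + ∑ l ∈ range (n + 1), (n.choose l : ℚ) * (-1) ^ l := Finset.sum_add_distrib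
    _ = ∑ l ∈ range n, (n.choose (l + 1) : ℚ) * (-1) ^ l := by
        rw [halt, add_zero, Finset.sum_range_succ, Nat.choose_succ_self]
        norm_num

private lemma aC_succ_succ (n k : ℕ) : aC (n + 1) (k + 1) = aC n (k + 1) + bC n k := by
  rcases le_or_gt n k with h | h
  · have h1 : n + 1 - (k + 1) = 0 := by omega
    have h2 : n - (k + 1) = 0 := by omega
    have h3 : n - k = 0 := by omega
    simp [aC, bC, h1, h2, h3]
  · have hr : n - k = (n - (k + 1)) + 1 := by omega
    have hext : aC n (k + 1)
        = ∑ l ∈ range (n - k),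
            (n.choose (l + (k + 1) + 1) : ℚ) * (l.factorial : ℚ)
              / ((l + (k + 1)).factorial : ℚ) * (-1 : ℚ) ^ l := by
      unfold aC
      rw [hr, Finset.sum_range_succ]
      have hidx : (n - (k + 1)) + (k + 1) + 1 = n + 1 := by omega
      rw [hidx, Nat.choose_succ_self]
      norm_num
    have h1 : n + 1 - (k + 1) = n - k := by omega
    calc aC (n + 1) (k + 1)
        = ∑ l ∈ range (n - k),
            ((n + 1).choose (l + (k + 1) + 1) : ℚ) * (l.factorial : ℚ)
              / ((l + (k + 1)).factorial : ℚ) * (-1 : ℚ) ^ l := by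
          unfold aC; rw [h1]
      _ = ∑ l ∈ range (n - k),
            ((n.choose (l + (k + 1) + 1) : ℚ) * (l.factorial : ℚ)
              / ((l + (k + 1)).factorial : ℚ) * (-1 : ℚ) ^ l
            + (n.choose (l + k + 1) : ℚ) * (l.factorial : ℚ)
              / ((l + k + 1).factorial : ℚ) * (-1 : ℚ) ^ l) := by
          refine Finset.sum_congr rfl fun l _ => ?_
          have pascal : ((n + 1).choose (l + (k + 1) + 1) : ℚ)
              = (n.choose (l + (k + 1)) : ℚ) + (n.choose (l + (k + 1) + 1) : ℚ) := by
            rw [Nat.choose_succ_succ]; push_cast; ring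
          rw [pascal]
          have hidx2 : l + (k + 1) = l + k + 1 := by omega
          rw [hidx2]
          ring
      _ = aC n (k + 1) + bC n k := by
          rw [Finset.sum_add_distrib, ← hext]; rfl

private lemma bC_succ (n k : ℕ) : bC (n + 1) k = aC (n + 1) k / ((n : ℚ) + 1) + bC n k := by
  rcases le_or_gt (n + 1) k with h | h
  · have h1 : n + 1 - k = 0 := by omega
    have h2 : n - k = 0 := by omega
    simp [aC, bC, h1, h2]
  · have hr : n + 1 - k = (n - k) + 1 := by omega
    have hext : bC n k
        = ∑ l ∈ range (n + 1 - k),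
            (n.choose (l + k + 1) : ℚ) * (l.factorial : ℚ)
              / ((l + k + 1).factorial : ℚ) * (-1 : ℚ) ^ l := by
      unfold bC
      rw [hr, Finset.sum_range_succ]
      have hidx : (n - k) + k + 1 = n + 1 := by omega
      rw [hidx, Nat.choose_succ_self]
      norm_num
    rw [hext]
    unfold aC bC
    rw [Finset.sum_div, ← Finset.sum_add_distrib]
    refine Finset.sum_congr rfl fun l _ => ?_
    have key : ((n + 1).choose (l + k + 1) : ℚ) * (l + k + 1) = (n + 1) * (n.choose (l + k) : ℚ) := by
      exact_mod_cast congrArg (Nat.cast : ℕ → ℚ)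
        (by simpa [Nat.succ_eq_add_one, mul_comm] using (Nat.add_one_mul_choose_eq n (l + k)).symm)
    have pascal : ((n + 1).choose (l + k + 1) : ℚ)
        = (n.choose (l + k) : ℚ) + (n.choose (l + k + 1) : ℚ) := by
      rw [Nat.choose_succ_succ]; push_cast; ring
    have hf : ((l + k).factorial : ℚ) ≠ 0 := by positivity
    have hfs : ((l + k + 1).factorial : ℚ) = ((l : ℚ) + k + 1) * ((l + k).factorial : ℚ) := by
      rw [Nat.factorial_succ]; push_cast; ring
    have hn1 : ((n : ℚ) + 1) ≠ 0 := by positivity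
    have hlk : ((l : ℚ) + k + 1) ≠ 0 := by positivity
    have hne : (((l : ℚ) + k + 1) * ((l + k).factorial : ℚ)) * ((n : ℚ) + 1) ≠ 0 :=
      mul_ne_zero (mul_ne_zero hlk hf) hn1
    rw [hfs]
    apply mul_left_cancel₀ hne
    field_simp
    linear_combination ((n:ℚ)+1) * pascal - key

private noncomputable def SA (n : ℕ) : Polynomial ℚ := ∑ k ∈ range n, C (aC n k) * X ^ k
private noncomputable def SB (n : ℕ) : Polynomial ℚ := ∑ k ∈ range n, C (bC n k) * X ^ k

private lemma SA_succ (n : ℕ) (hn : 1 ≤ n) : SA (n + 1) = X * SB n + SA n := by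
  unfold SA SB
  rw [Finset.sum_range_succ' (fun k => C (aC (n + 1) k) * X ^ k) n]
  simp only [aC_succ_succ, aC_succ_zero n hn, map_add, pow_zero, add_mul]
  rw [Finset.sum_add_distrib]
  have e1 : ∑ x ∈ range n, C (aC n (x + 1)) * X ^ (x + 1) + C (aC n 0) * 1
      = ∑ k ∈ range n, C (aC n k) * X ^ k := by
    have h2 := Finset.sum_range_succ' (fun k => C (aC n k) * X ^ k) n
    simp only [pow_zero] at h2
    rw [← h2, Finset.sum_range_succ, aC_self]
    simp
  have e2 : ∑ x ∈ range n, C (bC n x) * X ^ (x + 1)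
      = X * ∑ k ∈ range n, C (bC n k) * X ^ k := by
    rw [Finset.mul_sum]
    exact Finset.sum_congr rfl fun k _ => by ring
  rw [e2, add_right_comm, e1]
  ring

private lemma SB_succ (n : ℕ) : SB (n + 1) = C (((n : ℚ) + 1)⁻¹) * SA (n + 1) + SB n := by
  unfold SA SB
  rw [Finset.mul_sum]
  have hb : ∑ k ∈ range n, C (bC n k) * X ^ k
      = ∑ k ∈ range (n + 1), C (bC n k) * X ^ k := by
    rw [Finset.sum_range_succ, bC_self]
    simp
  rw [hb, ← Finset.sum_add_distrib]
  refine Finset.sum_congr rfl fun k _ => ?_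
  rw [bC_succ]
  rw [map_add, add_mul]
  congr 1
  rw [div_eq_inv_mul, map_mul]
  ring

private lemma double_a (n : ℕ) :
    (∑ k ∈ Finset.range n, ∑ l ∈ Finset.range (n - k),
        C ((n.choose (l + k + 1) : ℚ) * (l.factorial : ℚ) / ((l + k).factorial : ℚ)
            * (-1 : ℚ) ^ l) * X ^ k) = SA n := by
  refine Finset.sum_congr rfl fun k _ => ?_
  rw [← Finset.sum_mul, ← map_sum]
  rfl

private lemma double_b (n : ℕ) :
    (∑ k ∈ Finset.range n, ∑ l ∈ Finset.range (n - k),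
        C ((n.choose (l + k + 1) : ℚ) * (l.factorial : ℚ) / ((l + k + 1).factorial : ℚ)
            * (-1 : ℚ) ^ l) * X ^ k) = SB n := by
  refine Finset.sum_congr rfl fun k _ => ?_
  rw [← Finset.sum_mul, ← map_sum]
  rfl


/-- With `Pₙ/Qₙ` the truncations of the continued fraction with partial
denominators `mₙ = x` (`n` odd), `mₙ = 2/n` (`n` even):
`P_{2n-1}(x) = ∑_{k=0}^{n-1} ∑_{l=0}^{n-k-1} (C(n,l+k+1)·l!/(l+k)!) (-1)^l x^k` and
`P_{2n}(x) = ∑_{k=0}^{n-1} ∑_{l=0}^{n-k-1} (C(n,l+k+1)·l!/(l+k+1)!) (-1)^l x^k` for `n ≥ 1`. -/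
theorem P_explicit
    (P Q : ℤ → Polynomial ℚ) (m : ℤ → Polynomial ℚ)
    (hm : ∀ n : ℤ, m n = if Odd n then (X : Polynomial ℚ) else C (2 / (n : ℚ)))
    (hPm1 : P (-1) = 1) (hQm1 : Q (-1) = 0) (hP0 : P 0 = 0) (hQ0 : Q 0 = 1)
    (hP : ∀ n : ℤ, 1 ≤ n → P n = m n * P (n - 1) + P (n - 2))
    (hQ : ∀ n : ℤ, 1 ≤ n → Q n = m n * Q (n - 1) + Q (n - 2)) :
    ∀ n : ℕ, 1 ≤ n →
      P (2 * (n : ℤ) - 1)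
          = ∑ k ∈ Finset.range n, ∑ l ∈ Finset.range (n - k),
              C ((n.choose (l + k + 1) : ℚ) * (l.factorial : ℚ) / ((l + k).factorial : ℚ)
                  * (-1 : ℚ) ^ l) * X ^ k ∧
      P (2 * (n : ℤ))
          = ∑ k ∈ Finset.range n, ∑ l ∈ Finset.range (n - k),
              C ((n.choose (l + k + 1) : ℚ) * (l.factorial : ℚ) / ((l + k + 1).factorial : ℚ)
                  * (-1 : ℚ) ^ l) * X ^ k := by
  have main : ∀ n : ℕ, 1 ≤ n → P (2 * (n : ℤ) - 1) = SA n ∧ P (2 * (n : ℤ)) = SB n := by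
    intro n hn
    induction n, hn using Nat.le_induction with
    | base =>
      have h1 : P 1 = 1 := by
        have := hP 1 le_rfl
        rw [hm 1, if_pos odd_one] at this
        norm_num [hP0, hPm1] at this
        exact this
      have h2 : P 2 = 1 := by
        have := hP 2 (by norm_num)
        rw [hm 2, if_neg (by decide)] at this
        norm_num [h1, hP0] at this
        exact this
      constructor
      · norm_num [h1, SA, aC]
      · norm_num [h2, SB, bC]
    | succ n hn ih =>
      obtain ⟨ihA, ihB⟩ := ih
      have hodd : Odd (2 * (n : ℤ) + 1) := ⟨n, by ring⟩
      have h1 : P (2 * (n : ℤ) + 1) = X * SB n + SA n := by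
        have h := hP (2 * (n : ℤ) + 1) (by omega)
        rw [hm, if_pos hodd] at h
        have e1 : (2 * (n : ℤ) + 1 - 1) = 2 * n := by ring
        have e2 : (2 * (n : ℤ) + 1 - 2) = 2 * n - 1 := by ring
        rw [e1, e2, ihA, ihB] at h
        exact h
      have heven : ¬ Odd (2 * (n : ℤ) + 2) := by
        rw [Int.not_odd_iff_even]; exact ⟨n + 1, by ring⟩
      have hval : (2 / (((2 * (n : ℤ) + 2 : ℤ)) : ℚ)) = ((n : ℚ) + 1)⁻¹ := by
        have hn1 : ((n : ℚ) + 1) ≠ 0 := by positivity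
        push_cast
        rw [inv_eq_one_div]
        rw [div_eq_div_iff (by positivity) hn1]
        ring
      have h2 : P (2 * (n : ℤ) + 2) = C (((n : ℚ) + 1)⁻¹) * P (2 * (n : ℤ) + 1) + SB n := by
        have h := hP (2 * (n : ℤ) + 2) (by omega)
        rw [hm, if_neg heven, hval] at h
        have e1 : (2 * (n : ℤ) + 2 - 1) = 2 * n + 1 := by ring
        have e2 : (2 * (n : ℤ) + 2 - 2) = 2 * n := by ring
        rw [e1, e2, ihB] at h
        exact h
      have hA' : P (2 * (n : ℤ) + 1) = SA (n + 1) := by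
        rw [h1, SA_succ n hn]
      have hB' : P (2 * (n : ℤ) + 2) = SB (n + 1) := by
        rw [h2, hA', SB_succ n]
      constructor
      · have e : (2 * ((n : ℕ) + 1 : ℕ) - 1 : ℤ) = 2 * (n : ℤ) + 1 := by push_cast; ring
        rw [show ((n + 1 : ℕ) : ℤ) = (n : ℤ) + 1 by push_cast; ring]
        rw [show (2 * ((n : ℤ) + 1) - 1) = 2 * (n : ℤ) + 1 by ring]
        exact hA'
      · rw [show ((n + 1 : ℕ) : ℤ) = (n : ℤ) + 1 by push_cast; ring]
        rw [show (2 * ((n : ℤ) + 1)) = 2 * (n : ℤ) + 2 by ring]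
        exact hB'
  intro n hn
  obtain ⟨hA, hB⟩ := main n hn
  exact ⟨by rw [hA, ← double_a], by rw [hB, ← double_b]⟩
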